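/- Let V = I₃ and W₁ = E₁₂ - E₂₁, W₂ = E₂₃ - E₃₂, W₃ = E₃₁ - E₁₃ in M₃(ℂ). Then for every X ∈ M₃(ℂ), V* X V + Σ_{j=1}^{3} W_j* Xᵗ W_j = Tr(X) · I₃. -/

import Mathlib

open Matrix Complex

theorem stmt18 (X : Matrix (Fin 3) (Fin 3) ℂ) :
    (1 : Matrix (Fin 3) (Fin 3) ℂ)ᴴ * X * 1 +
      ((Matrix.single 0 1 (1 : ℂ) - Matrix.single 1 0 1)ᴴ * Xᵀ *
          (Matrix.single 0 1 1 - Matrix.single 1 0 1) +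
        (Matrix.single 1 2 (1 : ℂ) - Matrix.single 2 1 1)ᴴ * Xᵀ *
          (Matrix.single 1 2 1 - Matrix.single 2 1 1) +
        (Matrix.single 2 0 (1 : ℂ) - Matrix.single 0 2 1)ᴴ * Xᵀ *
          (Matrix.single 2 0 1 - Matrix.single 0 2 1)) =
      X.trace • (1 : Matrix (Fin 3) (Fin 3) ℂ) := by
  ext i j
  fin_cases i <;> fin_cases j <;>
    simp [Matrix.mul_apply, Matrix.trace, Matrix.diag, Fin.sum_univ_succ,
      Matrix.single, Matrix.one_apply, Matrix.conjTranspose_apply] <;> ring
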